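/- arXiv:1801.03056 — 2 statements merged into one kernel-verified Lean document; each statement's English description precedes it below -/
import Mathlib

section
/- Let G = GL_n(ℤ_p) for p an odd prime, and let H be the kernel of the reduction map π : GL_n(ℤ_p) → GL_n(ℤ/pℤ). Then for all i ≥ 1, H^{p^i} = ker(GL_n(ℤ_p) → GL_n(ℤ/p^{i+1}ℤ)), where H^{p^i} denotes the closed subgroup of H generated by p^i-th powers. -/
open Matrix

/-- Reduction `GL_n(ℤ_p) → GL_n(ℤ/p^kℤ)`. -/
noncomputable def glRed (p : ℕ) [Fact p.Prime] (n k : ℕ) :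
    GL (Fin n) ℤ_[p] →* GL (Fin n) (ZMod (p ^ k)) :=
  Matrix.GeneralLinearGroup.map (PadicInt.toZModPow k)

namespace Stmt1Aux

open Finset Filter Topology

/-! ### Arithmetic auxiliary lemmas -/

lemma nat_choose_pow_dvd {p : ℕ} (hp : p.Prime) {i m : ℕ} (hm : 1 ≤ m) (hmi : m ≤ p ^ i) :
    p ^ (i - (m.factorization p)) ∣ Nat.choose (p ^ i) m := by
  set v := m.factorization p with hv
  have hm0 : m ≠ 0 := by omega
  have hdvd : p ^ v ∣ m := Nat.ordProj_dvd m p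
  have hvle : v ≤ i := by
    have h1 : p ^ v ≤ m := Nat.le_of_dvd (by omega) hdvd
    exact (Nat.pow_le_pow_iff_right hp.one_lt).mp (h1.trans hmi)
  set m' := m / p ^ v with hm'def
  have hm' : p ^ v * m' = m := Nat.ordProj_mul_ordCompl_eq_self m p
  have hpm' : ¬ p ∣ m' := Nat.not_dvd_ordCompl hp hm0
  have hNpos : 1 ≤ p ^ i := Nat.one_le_pow _ _ hp.pos
  have key : p ^ i ∣ m * Nat.choose (p ^ i) m := by
    have h := Nat.add_one_mul_choose_eq (p ^ i - 1) (m - 1)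
    simp only [Nat.succ_eq_add_one, Nat.sub_add_cancel hNpos, Nat.sub_add_cancel hm] at h
    exact ⟨Nat.choose (p ^ i - 1) (m - 1), by rw [h, Nat.mul_comm]⟩
  have key2 : p ^ i ∣ p ^ v * (m' * Nat.choose (p ^ i) m) := by
    rw [← mul_assoc, hm']; exact key
  have hcop : Nat.Coprime (p ^ (i - v)) m' := Nat.Coprime.pow_left _
    ((Nat.Prime.coprime_iff_not_dvd hp).mpr hpm')
  have key3 : p ^ (i - v) ∣ m' * Nat.choose (p ^ i) m := by
    have hsplit : p ^ i = p ^ v * p ^ (i - v) := by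
      rw [← pow_add]; congr 1; omega
    nth_rewrite 1 [hsplit] at key2
    exact (Nat.mul_dvd_mul_iff_left (pow_pos hp.pos v)).mp key2
  exact hcop.dvd_of_dvd_mul_left key3

lemma nat_fact_le_self {p m : ℕ} (hp : p.Prime) (hm : 1 ≤ m) :
    m.factorization p + 1 ≤ m := by
  set v := m.factorization p
  have hdvd : p ^ v ∣ m := Nat.ordProj_dvd m p
  have h1 : p ^ v ≤ m := Nat.le_of_dvd (by omega) hdvd
  have h2 : v < p ^ v := Nat.lt_pow_self hp.one_lt
  omega

lemma nat_fact_add_two_le {p m : ℕ} (hp : p.Prime) (hodd : p ≠ 2) (hm : 2 ≤ m) :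
    m.factorization p + 2 ≤ m := by
  set v := m.factorization p
  rcases Nat.eq_zero_or_pos v with hv | hv
  · omega
  · have hdvd : p ^ v ∣ m := Nat.ordProj_dvd m p
    have h1 : p ^ v ≤ m := Nat.le_of_dvd (by omega) hdvd
    have hp3 : 3 ≤ p := by have := hp.two_le; rcases Nat.lt_or_ge p 3 with h | h; omega; omega
    have h2 : ∀ w : ℕ, w + 3 ≤ 3 ^ (w + 1) := by
      intro w
      induction w with
      | zero => norm_num
      | succ k ih =>
        have h3 : 1 ≤ 3 ^ (k + 1) := Nat.one_le_pow _ _ (by norm_num)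
        have h4 : 3 ^ (k + 1 + 1) = 3 * 3 ^ (k + 1) := by ring
        omega
    have h5 := h2 (v - 1)
    have h6 : v - 1 + 1 = v := by omega
    rw [h6] at h5
    have h3 : 3 ^ v ≤ p ^ v := Nat.pow_le_pow_left hp3 _
    omega

variable {p : ℕ} [Fact p.Prime] {n : ℕ}

lemma fact_le_of_le_pow {i m : ℕ} (hp : p.Prime) (hm : 1 ≤ m) (hmi : m ≤ p ^ i) :
    m.factorization p ≤ i := by
  have hdvd : p ^ (m.factorization p) ∣ m := Nat.ordProj_dvd m p
  have h1 : p ^ (m.factorization p) ≤ m := Nat.le_of_dvd (by omega) hdvd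
  exact (Nat.pow_le_pow_iff_right hp.one_lt).mp (h1.trans hmi)

/-! ### Matrix entrywise divisibility -/

lemma entry_dvd_mul {R : Type*} [CommRing R] {d e : R} {A B : Matrix (Fin n) (Fin n) R}
    (hA : ∀ a b, d ∣ A a b) (hB : ∀ a b, e ∣ B a b) : ∀ a b, d * e ∣ (A * B) a b := by
  intro a b
  rw [Matrix.mul_apply]
  exact Finset.dvd_sum fun c _ => mul_dvd_mul (hA a c) (hB c b)

lemma entry_dvd_pow {R : Type*} [CommRing R] {d : R} {X : Matrix (Fin n) (Fin n) R}
    (hX : ∀ a b, d ∣ X a b) : ∀ m, 1 ≤ m → ∀ a b, d ^ m ∣ (X ^ m) a b := by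
  intro m hm
  induction m with
  | zero => omega
  | succ k ih =>
    rcases Nat.eq_zero_or_pos k with hk | hk
    · subst hk; simpa using hX
    · intro a b
      rw [pow_succ, pow_succ]
      exact entry_dvd_mul (ih hk) hX a b

lemma expand_pow (X : Matrix (Fin n) (Fin n) ℤ_[p]) (N : ℕ) :
    (1 + X) ^ N = ∑ m ∈ Finset.range (N + 1), Nat.choose N m • X ^ m := by
  rw [add_comm, (Commute.one_right X).add_pow]
  refine Finset.sum_congr rfl fun m _ => ?_
  rw [one_pow, mul_one, ← nsmul_eq_mul']

lemma sum_split {M : Type*} [AddCommMonoid M] (N : ℕ) (hN : 1 ≤ N) (f : ℕ → M) :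
    ∑ m ∈ Finset.range (N + 1), f m = f 0 + f 1 + ∑ m ∈ Finset.Ico 2 (N + 1), f m := by
  rw [Finset.range_eq_Ico,
    ← Finset.sum_Ico_consecutive _ (by omega : (0:ℕ) ≤ 2) (by omega : 2 ≤ N + 1)]
  congr 1
  have : Finset.Ico (0:ℕ) 2 = {0, 1} := by decide
  rw [this]
  simp

lemma term_dvd (hp : p.Prime) {i j : ℕ} {X : Matrix (Fin n) (Fin n) ℤ_[p]}
    (hX : ∀ a b, (p : ℤ_[p]) ^ j ∣ X a b) {m : ℕ} (hm : 1 ≤ m) (hmi : m ≤ p ^ i) :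
    ∀ a b, (p : ℤ_[p]) ^ (i - (m.factorization p) + m * j) ∣
      (Nat.choose (p ^ i) m • X ^ m) a b := by
  intro a b
  rw [Matrix.smul_apply, nsmul_eq_mul, pow_add]
  have h1 : (p : ℤ_[p]) ^ (i - m.factorization p) ∣ (Nat.choose (p ^ i) m : ℤ_[p]) := by
    have := nat_choose_pow_dvd hp hm hmi (i := i)
    have h2 : ((p ^ (i - m.factorization p) : ℕ) : ℤ_[p]) ∣ ((Nat.choose (p ^ i) m : ℕ) : ℤ_[p]) :=
      Nat.cast_dvd_cast this
    simpa using h2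
  have h2 : (p : ℤ_[p]) ^ (m * j) ∣ (X ^ m) a b := by
    have := entry_dvd_pow hX m hm a b
    rwa [← pow_mul, mul_comm j m] at this
  exact mul_dvd_mul h1 h2

/-! ### Kernel characterization -/

lemma mem_glRed_ker_iff (k : ℕ) (g : GL (Fin n) ℤ_[p]) :
    g ∈ (glRed p n k).ker ↔
      ∀ a b, (p : ℤ_[p]) ^ k ∣ ((g : Matrix (Fin n) (Fin n) ℤ_[p]) - 1) a b := by
  rw [MonoidHom.mem_ker, Units.ext_iff]
  have hval : (glRed p n k g : Matrix (Fin n) (Fin n) (ZMod (p ^ k)))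
      = (g : Matrix (Fin n) (Fin n) ℤ_[p]).map (PadicInt.toZModPow k) := rfl
  rw [hval]
  constructor
  · intro h a b
    have := congrFun (congrFun h a) b
    simp only [Matrix.map_apply] at this
    have h1 : (PadicInt.toZModPow k) (((g : Matrix (Fin n) (Fin n) ℤ_[p]) - 1) a b) = 0 := by
      simp only [Matrix.sub_apply, map_sub, this]
      rcases eq_or_ne a b with h | h
      · subst h; simp
      · simp [Matrix.one_apply_ne h]
    rw [← RingHom.mem_ker, PadicInt.ker_toZModPow, Ideal.mem_span_singleton] at h1
    simpa using h1
  · intro h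
    ext a b
    have h1 := h a b
    rw [← Ideal.mem_span_singleton, ← PadicInt.ker_toZModPow, RingHom.mem_ker] at h1
    simp only [Matrix.sub_apply, map_sub, sub_eq_zero] at h1
    simp only [Matrix.map_apply, Units.val_one, h1]
    rcases eq_or_ne a b with h | h
    · subst h; simp
    · simp [Matrix.one_apply_ne h]

lemma ker_anti {a b : ℕ} (hab : a ≤ b) : (glRed p n b).ker ≤ (glRed p n a).ker := by
  intro g hg
  rw [mem_glRed_ker_iff] at hg ⊢
  intro x y
  exact dvd_trans (pow_dvd_pow _ hab) (hg x y)

/-! ### Generators lie in the kernel -/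

lemma pow_mem_ker (i : ℕ) (h : GL (Fin n) ℤ_[p]) (hh : h ∈ (glRed p n 1).ker) :
    h ^ (p ^ i) ∈ (glRed p n (i + 1)).ker := by
  have hp := (Fact.out : p.Prime)
  rw [mem_glRed_ker_iff] at hh ⊢
  set X : Matrix (Fin n) (Fin n) ℤ_[p] := (h : Matrix (Fin n) (Fin n) ℤ_[p]) - 1 with hX
  have hXd : ∀ a b, (p : ℤ_[p]) ^ 1 ∣ X a b := hh
  have hval : ((h ^ p ^ i : GL (Fin n) ℤ_[p]) : Matrix (Fin n) (Fin n) ℤ_[p])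
      = (1 + X) ^ (p ^ i) := by
    rw [Units.val_pow_eq_pow_val]
    congr 1
    rw [hX]; abel
  intro a b
  rw [hval, expand_pow]
  have hsum : (∑ m ∈ Finset.range (p ^ i + 1), Nat.choose (p ^ i) m • X ^ m) - 1
      = ∑ m ∈ Finset.range (p ^ i), Nat.choose (p ^ i) (m + 1) • X ^ (m + 1) := by
    rw [Finset.sum_range_succ' (fun m => Nat.choose (p ^ i) m • X ^ m) (p ^ i)]
    simp
  rw [hsum, Matrix.sum_apply]
  refine Finset.dvd_sum fun m hm => ?_
  rw [Finset.mem_range] at hm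
  have hm1 : 1 ≤ m + 1 := by omega
  have hm2 : m + 1 ≤ p ^ i := by omega
  have hd := term_dvd hp hXd hm1 hm2 a b
  refine dvd_trans (pow_dvd_pow _ ?_) hd
  have hv1 := nat_fact_le_self (m := m + 1) hp hm1
  have hv2 := fact_le_of_le_pow hp hm1 hm2
  omega

/-! ### The key approximation step -/

lemma step_lemma (hodd : p ≠ 2) {i k : ℕ} (hi : 1 ≤ i) (hk : i + 1 ≤ k) (g : GL (Fin n) ℤ_[p])
    (hg : g ∈ (glRed p n k).ker) :
    ∃ h : GL (Fin n) ℤ_[p], h ∈ (glRed p n 1).ker ∧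
      (h ^ p ^ i)⁻¹ * g ∈ (glRed p n (k + 1)).ker := by
  have hp := (Fact.out : p.Prime)
  rw [mem_glRed_ker_iff] at hg
  set A : Matrix (Fin n) (Fin n) ℤ_[p] :=
    fun a b => Classical.choose (hg a b) with hAdef
  have hA : ∀ a b, ((g : Matrix (Fin n) (Fin n) ℤ_[p]) - 1) a b = (p : ℤ_[p]) ^ k * A a b :=
    fun a b => Classical.choose_spec (hg a b)
  set X : Matrix (Fin n) (Fin n) ℤ_[p] := ((p : ℤ_[p]) ^ (k - i)) • A with hXdef
  have hXd : ∀ a b, (p : ℤ_[p]) ^ (k - i) ∣ X a b := fun a b => ⟨A a b, by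
    rw [hXdef, Matrix.smul_apply, smul_eq_mul]⟩
  have hmap : (1 + X).map (PadicInt.toZModPow 1) = 1 := by
    have : (1 + X).map (PadicInt.toZModPow 1) = (PadicInt.toZModPow 1).mapMatrix (1 + X) := rfl
    rw [this, map_add, _root_.map_one]
    have hX0 : (PadicInt.toZModPow 1).mapMatrix X = 0 := by
      ext a b
      rw [RingHom.mapMatrix_apply, Matrix.map_apply, Matrix.zero_apply, ← RingHom.mem_ker,
        PadicInt.ker_toZModPow, Ideal.mem_span_singleton, pow_one]
      exact dvd_trans (dvd_pow_self (p : ℤ_[p]) (by omega)) (hXd a b)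
    rw [hX0, add_zero]
  have hunit : IsUnit (1 + X) := by
    rw [Matrix.isUnit_iff_isUnit_det]
    by_contra hnu
    have h1 : ‖(1 + X).det‖ < 1 :=
      lt_of_le_of_ne (PadicInt.norm_le_one _) (fun he => hnu (PadicInt.isUnit_iff.mpr he))
    rw [PadicInt.norm_lt_one_iff_dvd] at h1
    have h2 : PadicInt.toZModPow 1 (1 + X).det = 0 := by
      rw [← RingHom.mem_ker, PadicInt.ker_toZModPow, Ideal.mem_span_singleton, pow_one]
      exact h1
    rw [RingHom.map_det, RingHom.mapMatrix_apply, hmap, Matrix.det_one] at h2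
    haveI : Fact (1 < p ^ 1) := ⟨by simpa using hp.one_lt⟩
    exact one_ne_zero h2
  refine ⟨hunit.unit, ?_, ?_⟩
  · rw [mem_glRed_ker_iff]
    intro a b
    have : ((hunit.unit : GL (Fin n) ℤ_[p]) : Matrix (Fin n) (Fin n) ℤ_[p]) = 1 + X :=
      hunit.unit_spec
    rw [this]
    have : (1 + X - 1) = X := by abel
    rw [this, pow_one]
    exact dvd_trans (dvd_pow_self (p : ℤ_[p]) (by omega)) (hXd a b)
  · have claim : ∀ a b, (p : ℤ_[p]) ^ (k + 1) ∣
        (((hunit.unit ^ p ^ i : GL (Fin n) ℤ_[p]) : Matrix (Fin n) (Fin n) ℤ_[p])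
          - (g : Matrix (Fin n) (Fin n) ℤ_[p])) a b := by
      intro a b
      have hval : ((hunit.unit ^ p ^ i : GL (Fin n) ℤ_[p]) : Matrix (Fin n) (Fin n) ℤ_[p])
          = (1 + X) ^ (p ^ i) := by
        rw [Units.val_pow_eq_pow_val, hunit.unit_spec]
      rw [hval, expand_pow, sum_split (p ^ i) (Nat.one_le_pow _ _ hp.pos)]
      have hf0 : Nat.choose (p ^ i) 0 • X ^ 0 = (1 : Matrix (Fin n) (Fin n) ℤ_[p]) := by simp
      have hf1 : (Nat.choose (p ^ i) 1 • X ^ 1) a b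
          = (g : Matrix (Fin n) (Fin n) ℤ_[p]) a b - (1 : Matrix (Fin n) (Fin n) ℤ_[p]) a b := by
        rw [Nat.choose_one_right, pow_one, Matrix.smul_apply, nsmul_eq_mul, hXdef,
          Matrix.smul_apply, smul_eq_mul, ← mul_assoc]
        push_cast
        rw [← pow_add]
        have : i + (k - i) = k := by omega
        rw [this, ← hA a b, Matrix.sub_apply]
      rw [Matrix.sub_apply, Matrix.add_apply, Matrix.add_apply, hf0, hf1]
      have : (1 : Matrix (Fin n) (Fin n) ℤ_[p]) a b
          + ((g : Matrix (Fin n) (Fin n) ℤ_[p]) a b - (1 : Matrix (Fin n) (Fin n) ℤ_[p]) a b)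
          + (∑ m ∈ Finset.Ico 2 (p ^ i + 1), Nat.choose (p ^ i) m • X ^ m) a b
          - (g : Matrix (Fin n) (Fin n) ℤ_[p]) a b
          = (∑ m ∈ Finset.Ico 2 (p ^ i + 1), Nat.choose (p ^ i) m • X ^ m) a b := by ring
      rw [this, Matrix.sum_apply]
      refine Finset.dvd_sum fun m hm => ?_
      rw [Finset.mem_Ico] at hm
      have hm1 : 1 ≤ m := by omega
      have hm2 : m ≤ p ^ i := by omega
      have hd := term_dvd hp hXd hm1 hm2 a b
      refine dvd_trans (pow_dvd_pow _ ?_) hd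
      have hv2 := nat_fact_add_two_le hp hodd (by omega : 2 ≤ m)
      have hvi := fact_le_of_le_pow hp hm1 hm2
      set v := m.factorization p with hvdef
      set d := k - i with hddef
      have hd1 : 1 ≤ d := by omega
      have h4 : (v + 2) * d = v * d + 2 * d := by ring
      have h5 : (v + 2) * d ≤ m * d := Nat.mul_le_mul_right _ hv2
      have h6 : v * 1 ≤ v * d := Nat.mul_le_mul_left _ hd1
      rw [Nat.mul_one] at h6
      set B := m * d with hBdef
      set C := v * d with hCdef
      omega
    have hmapeq : glRed p n (k + 1) (hunit.unit ^ p ^ i) = glRed p n (k + 1) g := by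
      apply Units.ext
      show ((hunit.unit ^ p ^ i : GL (Fin n) ℤ_[p]) : Matrix (Fin n) (Fin n) ℤ_[p]).map
          (PadicInt.toZModPow (k + 1))
        = ((g : GL (Fin n) ℤ_[p]) : Matrix (Fin n) (Fin n) ℤ_[p]).map (PadicInt.toZModPow (k + 1))
      ext a b
      rw [Matrix.map_apply, Matrix.map_apply, ← sub_eq_zero, ← map_sub, ← RingHom.mem_ker,
        PadicInt.ker_toZModPow, Ideal.mem_span_singleton]
      have := claim a b
      rwa [Matrix.sub_apply] at this
    rw [MonoidHom.mem_ker, MonoidHom.map_mul, MonoidHom.map_inv, hmapeq, inv_mul_cancel]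

/-! ### Topological facts -/

lemma dvd_iff_norm_le {k : ℕ} {x : ℤ_[p]} :
    (p : ℤ_[p]) ^ k ∣ x ↔ ‖x‖ ≤ (p : ℝ) ^ (-(k : ℤ)) := by
  rw [PadicInt.norm_le_pow_iff_mem_span_pow, Ideal.mem_span_singleton]

lemma isClosed_glRed_ker (k : ℕ) :
    IsClosed ((glRed p n k).ker : Set (GL (Fin n) ℤ_[p])) := by
  have hset : ((glRed p n k).ker : Set (GL (Fin n) ℤ_[p]))
      = ⋂ (a : Fin n) (b : Fin n),
        {g : GL (Fin n) ℤ_[p] |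
          ‖((g : Matrix (Fin n) (Fin n) ℤ_[p]) - 1) a b‖ ≤ (p : ℝ) ^ (-(k : ℤ))} := by
    ext g
    simp only [SetLike.mem_coe, mem_glRed_ker_iff, Set.mem_iInter, Set.mem_setOf_eq,
      dvd_iff_norm_le]
  rw [hset]
  refine isClosed_iInter fun a => isClosed_iInter fun b => ?_
  have hcont : Continuous fun g : GL (Fin n) ℤ_[p] =>
      ‖((g : Matrix (Fin n) (Fin n) ℤ_[p]) - 1) a b‖ := by
    apply Continuous.norm
    have h1 : Continuous fun g : GL (Fin n) ℤ_[p] =>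
        ((g : Matrix (Fin n) (Fin n) ℤ_[p])) a b :=
      Continuous.matrix_elem Units.continuous_val a b
    have h2 : Continuous fun g : GL (Fin n) ℤ_[p] =>
        ((g : Matrix (Fin n) (Fin n) ℤ_[p]) a b - (1 : Matrix (Fin n) (Fin n) ℤ_[p]) a b) :=
      h1.sub continuous_const
    simpa [Matrix.sub_apply] using h2
  exact isClosed_le hcont continuous_const

lemma entry_norm_le {k : ℕ} {D : Matrix (Fin n) (Fin n) ℤ_[p]}
    (hD : ∀ a b, (p : ℤ_[p]) ^ k ∣ D a b) (a b : Fin n) :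
    ‖D a b‖ ≤ (p : ℝ) ^ (-(k : ℤ)) := dvd_iff_norm_le.mp (hD a b)

lemma tendsto_of_ker_seq (g : GL (Fin n) ℤ_[p]) (s : ℕ → GL (Fin n) ℤ_[p])
    (hs : ∀ m, (s m)⁻¹ * g ∈ (glRed p n m).ker) :
    Tendsto s atTop (𝓝 g) := by
  have hp := (Fact.out : p.Prime)
  have hbound : ∀ m : ℕ, ∀ a b,
      ‖((s m : Matrix (Fin n) (Fin n) ℤ_[p]) - (g : Matrix (Fin n) (Fin n) ℤ_[p])) a b‖
        ≤ (p : ℝ) ^ (-(m : ℤ)) ∧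
      ‖(((s m)⁻¹ : GL (Fin n) ℤ_[p]) : Matrix (Fin n) (Fin n) ℤ_[p]) a b
          - ((g⁻¹ : GL (Fin n) ℤ_[p]) : Matrix (Fin n) (Fin n) ℤ_[p]) a b‖
        ≤ (p : ℝ) ^ (-(m : ℤ)) := by
    intro m a b
    set u : GL (Fin n) ℤ_[p] := (s m)⁻¹ * g with hu
    have hum : u ∈ (glRed p n m).ker := hs m
    have huinv : u⁻¹ ∈ (glRed p n m).ker := inv_mem hum
    rw [mem_glRed_ker_iff] at hum huinv
    have hsm : s m = g * u⁻¹ := by rw [hu, _root_.mul_inv_rev, inv_inv, mul_inv_cancel_left]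
    have hsminv : (s m)⁻¹ = u * g⁻¹ := by rw [hu, mul_assoc, mul_inv_cancel, mul_one]
    constructor
    · have heq : ((s m : Matrix (Fin n) (Fin n) ℤ_[p]) - (g : Matrix (Fin n) (Fin n) ℤ_[p]))
          = (g : Matrix (Fin n) (Fin n) ℤ_[p]) * (((u⁻¹ : GL (Fin n) ℤ_[p]) :
              Matrix (Fin n) (Fin n) ℤ_[p]) - 1) := by
        rw [Matrix.mul_sub, Matrix.mul_one, hsm, Units.val_mul]
      rw [heq]
      refine entry_norm_le (fun a b => ?_) a b
      rw [Matrix.mul_apply]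
      exact Finset.dvd_sum fun c _ => Dvd.dvd.mul_left (huinv c b) _
    · have heq : (((s m)⁻¹ : GL (Fin n) ℤ_[p]) : Matrix (Fin n) (Fin n) ℤ_[p])
          - ((g⁻¹ : GL (Fin n) ℤ_[p]) : Matrix (Fin n) (Fin n) ℤ_[p])
          = (((u : GL (Fin n) ℤ_[p]) : Matrix (Fin n) (Fin n) ℤ_[p]) - 1)
            * ((g⁻¹ : GL (Fin n) ℤ_[p]) : Matrix (Fin n) (Fin n) ℤ_[p]) := by
        rw [Matrix.sub_mul, Matrix.one_mul, hsminv, Units.val_mul]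
      have := congrFun (congrFun heq a) b
      rw [Matrix.sub_apply] at this
      rw [this]
      refine entry_norm_le (D := _ * _) (fun a b => ?_) a b
      rw [Matrix.mul_apply]
      exact Finset.dvd_sum fun c _ => Dvd.dvd.mul_right (hum a c) _
  have hlim : Tendsto (fun m : ℕ => (p : ℝ) ^ (-(m : ℤ))) atTop (𝓝 0) := by
    have h1 : ∀ m : ℕ, (p : ℝ) ^ (-(m : ℤ)) = ((p : ℝ)⁻¹) ^ m := by
      intro m
      rw [_root_.zpow_neg, zpow_natCast, inv_pow]
    simp only [h1]
    refine tendsto_pow_atTop_nhds_zero_of_lt_one (by positivity) ?_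
    rw [inv_lt_one_iff₀]
    right
    exact_mod_cast hp.one_lt
  have t1 : Tendsto (fun m => ((s m : GL (Fin n) ℤ_[p]) : Matrix (Fin n) (Fin n) ℤ_[p]))
      atTop (𝓝 ((g : GL (Fin n) ℤ_[p]) : Matrix (Fin n) (Fin n) ℤ_[p])) := by
    refine tendsto_pi_nhds.mpr ?_
    intro a
    rw [tendsto_pi_nhds]
    intro b
    rw [tendsto_iff_dist_tendsto_zero]
    refine squeeze_zero (fun m => dist_nonneg) (fun m => ?_) hlim
    rw [dist_eq_norm]
    have := (hbound m a b).1
    rwa [Matrix.sub_apply] at this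
  have t2 : Tendsto (fun m => (((s m)⁻¹ : GL (Fin n) ℤ_[p]) : Matrix (Fin n) (Fin n) ℤ_[p]))
      atTop (𝓝 ((g⁻¹ : GL (Fin n) ℤ_[p]) : Matrix (Fin n) (Fin n) ℤ_[p])) := by
    refine tendsto_pi_nhds.mpr ?_
    intro a
    rw [tendsto_pi_nhds]
    intro b
    rw [tendsto_iff_dist_tendsto_zero]
    refine squeeze_zero (fun m => dist_nonneg) (fun m => ?_) hlim
    rw [dist_eq_norm]
    exact (hbound m a b).2
  rw [Units.isEmbedding_embedProduct.tendsto_nhds_iff]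
  exact t1.prodMk_nhds ((MulOpposite.continuous_op.tendsto _).comp t2)

end Stmt1Aux

open Stmt1Aux Filter

/-- for `p` an odd prime and `H = ker(GL_n(ℤ_p) → GL_n(ℤ/pℤ))`, the closed
subgroup of `H` generated by `p^i`-th powers equals `ker(GL_n(ℤ_p) → GL_n(ℤ/p^{i+1}ℤ))`. -/
theorem stmt1 (p : ℕ) [Fact p.Prime] (hodd : p ≠ 2) (n : ℕ) (hn : 1 ≤ n)
    (H : Subgroup (GL (Fin n) ℤ_[p])) (hH : H = (glRed p n 1).ker) :
    ∀ i : ℕ, 1 ≤ i →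
      (Subgroup.closure {x : GL (Fin n) ℤ_[p] | ∃ h ∈ H, x = h ^ p ^ i}).topologicalClosure
        = (glRed p n (i + 1)).ker := by
  subst hH
  intro i hi
  apply le_antisymm
  · refine Subgroup.topologicalClosure_minimal _ ?_ (isClosed_glRed_ker (p := p) (n := n) (i + 1))
    rw [Subgroup.closure_le]
    rintro x ⟨h, hh, rfl⟩
    exact pow_mem_ker i h hh
  · intro g hg
    have ex : ∀ m : ℕ, ∃ s : GL (Fin n) ℤ_[p],
        s ∈ Subgroup.closure {x : GL (Fin n) ℤ_[p] | ∃ h ∈ (glRed p n 1).ker, x = h ^ p ^ i} ∧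
        s⁻¹ * g ∈ (glRed p n m).ker := by
      intro m
      induction m with
      | zero =>
        refine ⟨1, one_mem _, ?_⟩
        haveI : Subsingleton (ZMod (p ^ 0)) := by rw [pow_zero]; infer_instance
        rw [MonoidHom.mem_ker]
        exact Units.ext (Subsingleton.elim _ _)
      | succ m ih =>
        obtain ⟨s, hsmem, hsker⟩ := ih
        by_cases hcase : m + 1 ≤ i + 1
        · refine ⟨1, one_mem _, ?_⟩
          rw [inv_one, one_mul]
          exact ker_anti hcase hg
        · push_neg at hcase
          have hik : i + 1 ≤ m := by omega
          obtain ⟨h, hh1, hh2⟩ := step_lemma hodd hi hik (s⁻¹ * g) hsker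
          refine ⟨s * h ^ p ^ i, mul_mem hsmem (Subgroup.subset_closure ⟨h, hh1, rfl⟩), ?_⟩
          rw [_root_.mul_inv_rev, mul_assoc]
          exact hh2
    choose seq hseq using ex
    have htend := tendsto_of_ker_seq g seq (fun m => (hseq m).2)
    have hmem : g ∈ closure ((Subgroup.closure {x : GL (Fin n) ℤ_[p] |
        ∃ h ∈ (glRed p n 1).ker, x = h ^ p ^ i} : Subgroup (GL (Fin n) ℤ_[p])) :
          Set (GL (Fin n) ℤ_[p])) :=
      mem_closure_of_tendsto htend (Filter.Eventually.of_forall fun m => (hseq m).1)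
    rwa [← Subgroup.topologicalClosure_coe, SetLike.mem_coe] at hmem
end

section
/- Let G be a profinite group with a descending chain of open normal subgroups G(0) ≥ G(1) ≥ ⋯ such that the p-th power map induces isomorphisms G(i)/G(i+1) → G(i+1)/G(i+2) with each quotient isomorphic to (ℤ/pℤ)^d. Let Γ be a closed subgroup of G and set Γ(i) = G(i) ∩ Γ. Then for all sufficiently large i, the p-th power map induces an injective group homomorphism Γ(i)/Γ(i+1) → Γ(i+1)/Γ(i+2), and these injections are isomorphisms for i sufficiently large. -/
namespace Stmt3Aux

variable {G : Type*} [Group G]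

/-- the subquotient `Γ(i)/Γ(i+1)` where `Γ(i) = GN i ⊓ Γ`. -/
abbrev Q (GN : ℕ → Subgroup G) (Γ : Subgroup G) (i : ℕ) :=
  ↥(GN i ⊓ Γ) ⧸ ((GN (i + 1) ⊓ Γ).subgroupOf (GN i ⊓ Γ))

theorem key (p d : ℕ) (hp : p ≠ 0) (GN : ℕ → Subgroup G)
    (hnormal : ∀ i, (GN i).Normal)
    (hpow : ∀ i, ∀ g ∈ GN i, g ^ p ∈ GN (i + 1))
    (hhom : ∀ i, ∀ g ∈ GN i, ∀ h ∈ GN i, (g * h) ^ p * (g ^ p * h ^ p)⁻¹ ∈ GN (i + 2))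
    (hinj : ∀ i, ∀ g ∈ GN i, g ^ p ∈ GN (i + 2) → g ∈ GN (i + 1))
    (hquot : ∀ i, ∃ φ : ↥(GN i) →* (Fin d → Multiplicative (ZMod p)),
      Function.Surjective φ ∧ ∀ x : ↥(GN i), φ x = 1 ↔ (x : G) ∈ GN (i + 1))
    (Γ : Subgroup G) :
    ∃ N : ℕ, ∀ i ≥ N, ∀ h ∈ GN (i + 1) ⊓ Γ, ∃ g ∈ GN i ⊓ Γ,
      (g ^ p)⁻¹ * h ∈ GN (i + 2) ⊓ Γ := by
  classical
  haveI : NeZero p := ⟨hp⟩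
  choose φ hφs hφk using hquot
  -- key group identity
  have hid : ∀ u v w : G, u⁻¹ * w = (u⁻¹ * (w * (u * v)⁻¹) * u) * v := by
    intro u v w; group
  -- characterization of equality in the quotient
  have hmk : ∀ i (a b : ↥(GN i ⊓ Γ)),
      ((QuotientGroup.mk a : Q GN Γ i) = QuotientGroup.mk b) ↔
        ((a : G)⁻¹ * b ∈ GN (i + 1) ⊓ Γ) := by
    intro i a b
    rw [QuotientGroup.eq]
    simp [Subgroup.mem_subgroupOf]
  -- the two-way computation: a ≡ b mod Γ(i+1) iff a^p ≡ b^p mod Γ(i+2)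
  have hstep : ∀ i (a b : ↥(GN i ⊓ Γ)),
      ((a : G)⁻¹ * b ∈ GN (i + 1) ⊓ Γ) ↔
        (((a : G) ^ p)⁻¹ * (b : G) ^ p ∈ GN (i + 2) ⊓ Γ) := by
    intro i a b
    obtain ⟨ha1, ha2⟩ := Subgroup.mem_inf.mp a.2
    obtain ⟨hb1, hb2⟩ := Subgroup.mem_inf.mp b.2
    set c : G := (a : G)⁻¹ * b with hc
    have hac : (a : G) * c = b := by rw [hc]; group
    have hc1 : c ∈ GN i := mul_mem (inv_mem ha1) hb1
    have hc2 : c ∈ Γ := mul_mem (inv_mem ha2) hb2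
    have hX : ((a : G) * c) ^ p * ((a : G) ^ p * c ^ p)⁻¹ ∈ GN (i + 2) := hhom i a ha1 c hc1
    have hK : ((a : G) ^ p)⁻¹ * (((a : G) * c) ^ p * ((a : G) ^ p * c ^ p)⁻¹) * (a : G) ^ p
        ∈ GN (i + 2) := by
      simpa [mul_assoc] using (hnormal (i + 2)).conj_mem _ hX ((a : G) ^ p)⁻¹
    have hidc : ((a : G) ^ p)⁻¹ * ((a : G) * c) ^ p =
        (((a : G) ^ p)⁻¹ * (((a : G) * c) ^ p * ((a : G) ^ p * c ^ p)⁻¹) * (a : G) ^ p) * c ^ p :=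
      hid _ _ _
    constructor
    · rintro h
      obtain ⟨h1, -⟩ := Subgroup.mem_inf.mp h
      have hv : c ^ p ∈ GN (i + 2) := hpow (i + 1) c h1
      refine Subgroup.mem_inf.mpr ⟨?_, mul_mem (inv_mem (Γ.pow_mem ha2 p)) (Γ.pow_mem hb2 p)⟩
      rw [← hac, hidc]
      exact mul_mem hK hv
    · rintro h
      obtain ⟨h1, -⟩ := Subgroup.mem_inf.mp h
      have h1' : ((a : G) ^ p)⁻¹ * ((a : G) * c) ^ p ∈ GN (i + 2) := by rwa [hac]
      have hv : c ^ p ∈ GN (i + 2) := by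
        have : c ^ p = (((a : G) ^ p)⁻¹ * (((a : G) * c) ^ p * ((a : G) ^ p * c ^ p)⁻¹)
            * (a : G) ^ p)⁻¹ * (((a : G) ^ p)⁻¹ * ((a : G) * c) ^ p) := by
          rw [hidc]; group
        rw [this]
        exact mul_mem (inv_mem hK) h1'
      exact Subgroup.mem_inf.mpr ⟨hinj i c hc1 hv, hc2⟩
  -- the induced injective map on subquotients
  have hψ : ∀ i, ∃ ψ : Q GN Γ i → Q GN Γ (i + 1), Function.Injective ψ ∧
      ∀ a : ↥(GN i ⊓ Γ), ∃ b : ↥(GN (i + 1) ⊓ Γ), (b : G) = (a : G) ^ p ∧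
        ψ (QuotientGroup.mk a) = QuotientGroup.mk b := by
    intro i
    have hmem : ∀ a : ↥(GN i ⊓ Γ), (a : G) ^ p ∈ GN (i + 1) ⊓ Γ := fun a =>
      Subgroup.mem_inf.mpr ⟨hpow i a (Subgroup.mem_inf.mp a.2).1,
        Γ.pow_mem (Subgroup.mem_inf.mp a.2).2 p⟩
    refine ⟨Quotient.lift
      (fun a : ↥(GN i ⊓ Γ) => (QuotientGroup.mk ⟨(a : G) ^ p, hmem a⟩ : Q GN Γ (i + 1)))
      (fun a b hab => ?_), ?_, ?_⟩
    · have h1 : (QuotientGroup.mk a : Q GN Γ i) = QuotientGroup.mk b := Quotient.sound hab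
      have h2 := (hstep i a b).mp ((hmk i a b).mp h1)
      exact (hmk (i + 1) ⟨(a : G) ^ p, hmem a⟩ ⟨(b : G) ^ p, hmem b⟩).mpr h2
    · intro x y
      induction x using Quotient.inductionOn with | h a =>
      induction y using Quotient.inductionOn with | h b =>
      intro hxy
      have h2 := (hstep i a b).mpr
        ((hmk (i + 1) ⟨(a : G) ^ p, hmem a⟩ ⟨(b : G) ^ p, hmem b⟩).mp hxy)
      exact (hmk i a b).mpr h2
    · intro a
      exact ⟨⟨(a : G) ^ p, hmem a⟩, rfl, rfl⟩
  choose ψ hψinj hψmk using hψ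
  -- finiteness and bounded cardinality
  have hembed : ∀ i, ∃ e : Q GN Γ i → (Fin d → Multiplicative (ZMod p)),
      Function.Injective e := by
    intro i
    have hwd : ∀ a b : ↥(GN i ⊓ Γ), (a : G)⁻¹ * b ∈ GN (i + 1) ⊓ Γ ↔
        φ i ⟨a, (Subgroup.mem_inf.mp a.2).1⟩ = φ i ⟨b, (Subgroup.mem_inf.mp b.2).1⟩ := by
      intro a b
      constructor
      · intro h
        have : φ i (⟨a, (Subgroup.mem_inf.mp a.2).1⟩⁻¹ * ⟨b, (Subgroup.mem_inf.mp b.2).1⟩) = 1 :=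
          (hφk i _).2 (Subgroup.mem_inf.mp h).1
        rw [map_mul, map_inv] at this
        exact inv_mul_eq_one.mp this
      · intro h
        have : φ i (⟨a, (Subgroup.mem_inf.mp a.2).1⟩⁻¹ * ⟨b, (Subgroup.mem_inf.mp b.2).1⟩) = 1 := by
          rw [map_mul, map_inv, h, inv_mul_cancel]
        refine Subgroup.mem_inf.mpr ⟨(hφk i _).1 this,
          mul_mem (inv_mem (Subgroup.mem_inf.mp a.2).2) (Subgroup.mem_inf.mp b.2).2⟩
    refine ⟨Quotient.lift (fun a : ↥(GN i ⊓ Γ) => φ i ⟨a, (Subgroup.mem_inf.mp a.2).1⟩)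
      (fun a b hab => (hwd a b).mp ((hmk i a b).mp (Quotient.sound hab))), ?_⟩
    intro x y
    induction x using Quotient.inductionOn with | h a =>
    induction y using Quotient.inductionOn with | h b =>
    intro hxy
    exact (hmk i a b).mpr ((hwd a b).mpr hxy)
  have hfin : ∀ i, Finite (Q GN Γ i) := by
    intro i
    obtain ⟨e, he⟩ := hembed i
    exact Finite.of_injective e he
  have hbd : ∀ i, Nat.card (Q GN Γ i) ≤ Nat.card (Fin d → Multiplicative (ZMod p)) := by
    intro i
    obtain ⟨e, he⟩ := hembed i
    exact Nat.card_le_card_of_injective e he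
  have hmono : Monotone fun i => Nat.card (Q GN Γ i) := by
    apply monotone_nat_of_le_succ
    intro i
    have := hfin (i + 1)
    exact Nat.card_le_card_of_injective (ψ i) (hψinj i)
  -- the cardinalities are eventually constant
  have hbdd : BddAbove (Set.range fun i => Nat.card (Q GN Γ i)) := by
    refine ⟨Nat.card (Fin d → Multiplicative (ZMod p)), ?_⟩
    rintro x ⟨i, rfl⟩
    exact hbd i
  obtain ⟨N, hN⟩ := Nat.sSup_mem ⟨Nat.card (Q GN Γ 0), Set.mem_range_self 0⟩ hbdd
  have hconst : ∀ i ≥ N, Nat.card (Q GN Γ i) = Nat.card (Q GN Γ N) := by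
    intro i hi
    refine le_antisymm ?_ (hmono hi)
    have hN' : Nat.card (Q GN Γ N) = sSup (Set.range fun i => Nat.card (Q GN Γ i)) := hN
    rw [hN']
    exact le_csSup hbdd (Set.mem_range_self i)
  refine ⟨N, fun i hi h hh => ?_⟩
  have := hfin i
  have := hfin (i + 1)
  have hbij : Function.Bijective (ψ i) :=
    (Nat.bijective_iff_injective_and_card (ψ i)).mpr ⟨hψinj i, by
      rw [hconst i hi, hconst (i + 1) (le_trans hi (Nat.le_succ i))]⟩
  obtain ⟨x, hx⟩ := hbij.2 (QuotientGroup.mk ⟨h, hh⟩)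
  obtain ⟨a, rfl⟩ := QuotientGroup.mk_surjective x
  obtain ⟨b, hb, hab⟩ := hψmk i a
  rw [hab] at hx
  have := (hmk (i + 1) b ⟨h, hh⟩).mp hx
  rw [hb] at this
  exact ⟨a, a.2, this⟩

end Stmt3Aux


/-- if `G` is a profinite group with a descending chain of open normal subgroups
`G(i)` on which the `p`-th power map induces isomorphisms `G(i)/G(i+1) → G(i+1)/G(i+2)`
with each quotient `≅ (ℤ/pℤ)^d`, and `Γ ≤ G` is closed with `Γ(i) = G(i) ∩ Γ`, then for all
sufficiently large `i` the `p`-th power map induces an injective homomorphism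
`Γ(i)/Γ(i+1) → Γ(i+1)/Γ(i+2)`, and these maps are isomorphisms for `i` sufficiently large.
Induced maps between the subquotients are encoded elementwise. -/
theorem stmt3 (p d : ℕ) (hp : p.Prime) (hd : 1 ≤ d)
    (G : Type*) [Group G] [TopologicalSpace G] [IsTopologicalGroup G] [CompactSpace G]
    [TotallyDisconnectedSpace G]
    (GN : ℕ → Subgroup G)
    (hopen : ∀ i, IsOpen (GN i : Set G)) (hnormal : ∀ i, (GN i).Normal)
    (hdesc : ∀ i, GN (i + 1) ≤ GN i)
    -- the p-th power map induces isomorphisms `G(i)/G(i+1) → G(i+1)/G(i+2)`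
    (hpow : ∀ i, ∀ g ∈ GN i, g ^ p ∈ GN (i + 1))
    (hhom : ∀ i, ∀ g ∈ GN i, ∀ h ∈ GN i, (g * h) ^ p * (g ^ p * h ^ p)⁻¹ ∈ GN (i + 2))
    (hinj : ∀ i, ∀ g ∈ GN i, g ^ p ∈ GN (i + 2) → g ∈ GN (i + 1))
    (hsurj : ∀ i, ∀ h ∈ GN (i + 1), ∃ g ∈ GN i, (g ^ p)⁻¹ * h ∈ GN (i + 2))
    -- each quotient `G(i)/G(i+1)` is isomorphic to `(ℤ/pℤ)^d`
    (hquot : ∀ i, ∃ φ : ↥(GN i) →* (Fin d → Multiplicative (ZMod p)),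
      Function.Surjective φ ∧ ∀ x : ↥(GN i), φ x = 1 ↔ (x : G) ∈ GN (i + 1))
    (Γ : Subgroup G) (hΓ : IsClosed (Γ : Set G)) :
    (∃ N : ℕ, ∀ i ≥ N,
      (∀ g ∈ GN i ⊓ Γ, g ^ p ∈ GN (i + 1) ⊓ Γ) ∧
      (∀ g ∈ GN i ⊓ Γ, ∀ h ∈ GN i ⊓ Γ,
        (g * h) ^ p * (g ^ p * h ^ p)⁻¹ ∈ GN (i + 2) ⊓ Γ) ∧
      (∀ g ∈ GN i ⊓ Γ, g ^ p ∈ GN (i + 2) ⊓ Γ → g ∈ GN (i + 1) ⊓ Γ)) ∧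
    (∃ N : ℕ, ∀ i ≥ N,
      (∀ g ∈ GN i ⊓ Γ, g ^ p ∈ GN (i + 1) ⊓ Γ) ∧
      (∀ g ∈ GN i ⊓ Γ, ∀ h ∈ GN i ⊓ Γ,
        (g * h) ^ p * (g ^ p * h ^ p)⁻¹ ∈ GN (i + 2) ⊓ Γ) ∧
      (∀ g ∈ GN i ⊓ Γ, g ^ p ∈ GN (i + 2) ⊓ Γ → g ∈ GN (i + 1) ⊓ Γ) ∧
      (∀ h ∈ GN (i + 1) ⊓ Γ, ∃ g ∈ GN i ⊓ Γ, (g ^ p)⁻¹ * h ∈ GN (i + 2) ⊓ Γ)) := by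
  classical
  have hne : p ≠ 0 := hp.ne_zero
  have b1 : ∀ i, ∀ g ∈ GN i ⊓ Γ, g ^ p ∈ GN (i + 1) ⊓ Γ := by
    intro i g hg
    obtain ⟨h1, h2⟩ := Subgroup.mem_inf.mp hg
    exact Subgroup.mem_inf.mpr ⟨hpow i g h1, Γ.pow_mem h2 p⟩
  have b2 : ∀ i, ∀ g ∈ GN i ⊓ Γ, ∀ h ∈ GN i ⊓ Γ,
      (g * h) ^ p * (g ^ p * h ^ p)⁻¹ ∈ GN (i + 2) ⊓ Γ := by
    intro i g hg h hh
    obtain ⟨hg1, hg2⟩ := Subgroup.mem_inf.mp hg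
    obtain ⟨hh1, hh2⟩ := Subgroup.mem_inf.mp hh
    refine Subgroup.mem_inf.mpr ⟨hhom i g hg1 h hh1, ?_⟩
    exact mul_mem (Γ.pow_mem (mul_mem hg2 hh2) p)
      (inv_mem (mul_mem (Γ.pow_mem hg2 p) (Γ.pow_mem hh2 p)))
  have b3 : ∀ i, ∀ g ∈ GN i ⊓ Γ, g ^ p ∈ GN (i + 2) ⊓ Γ → g ∈ GN (i + 1) ⊓ Γ := by
    intro i g hg hgp
    obtain ⟨hg1, hg2⟩ := Subgroup.mem_inf.mp hg
    exact Subgroup.mem_inf.mpr ⟨hinj i g hg1 (Subgroup.mem_inf.mp hgp).1, hg2⟩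
  obtain ⟨N, hS⟩ := Stmt3Aux.key p d hne GN hnormal hpow hhom hinj hquot Γ
  exact ⟨⟨0, fun i _ => ⟨b1 i, b2 i, b3 i⟩⟩,
    ⟨N, fun i hi => ⟨b1 i, b2 i, b3 i, hS i hi⟩⟩⟩
end
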